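/- For every positive integer x, both 6x+5 and 6x+11 are prime if and only if x is NOT expressible in any of the four forms (6m−1)n + m − 1, (6m−1)n + m − 2, (6m+1)n − m − 1, (6m+1)n − m − 2 with m, n positive integers. -/

import Mathlib

/-- Every natural number `≡ 5 [MOD 6]` has a prime factor `≡ 5 [MOD 6]`. -/
lemma exists_prime_factor_five_mod_six :
    ∀ N : ℕ, N % 6 = 5 → ∃ p, p.Prime ∧ p ∣ N ∧ p % 6 = 5 := by
  intro N
  induction N using Nat.strong_induction_on with
  | _ N ih =>
    intro h
    have hN1 : N ≠ 1 := by omega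
    have hp : N.minFac.Prime := Nat.minFac_prime hN1
    have hd : N.minFac ∣ N := Nat.minFac_dvd N
    have h2 : ¬ (2 ∣ N.minFac) := by
      intro h2
      rcases (Nat.Prime.eq_one_or_self_of_dvd hp 2 h2) with h' | h'
      · omega
      · have : 2 ∣ N := h' ▸ hd
        omega
    have h3 : ¬ (3 ∣ N.minFac) := by
      intro h3
      rcases (Nat.Prime.eq_one_or_self_of_dvd hp 3 h3) with h' | h'
      · omega
      · have : 3 ∣ N := h' ▸ hd
        omega
    have hmod : N.minFac % 6 = 1 ∨ N.minFac % 6 = 5 := by omega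
    rcases hmod with h1 | h5
    · -- divide out and recurse
      obtain ⟨M, hNe⟩ := hd
      have hM5 : M % 6 = 5 := by
        have hmm : (N.minFac % 6) * (M % 6) % 6 = 5 := by
          rw [← Nat.mul_mod, ← hNe]; exact h
        rw [h1] at hmm
        omega
      have hMlt : M < N := by
        rcases Nat.lt_or_ge M N with h' | h'
        · exact h'
        · exfalso
          have : N.minFac * M ≥ 2 * N := by
            calc N.minFac * M ≥ 2 * M := Nat.mul_le_mul_right M hp.two_le
            _ ≥ 2 * N := by omega
          omega
      obtain ⟨p, hp', hpd, hp5⟩ := ih M hMlt hM5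
      exact ⟨p, hp', hpd.trans ⟨N.minFac, by rw [mul_comm]; exact hNe⟩, hp5⟩
    · exact ⟨N.minFac, hp, hd, h5⟩

/-- A composite number `≡ 5 [MOD 6]` factors as `(6a+5)(6b+1)` with `b ≥ 1`. -/
lemma comp_five_mod_six_factors (N : ℕ) (h5 : N % 6 = 5) (hnp : ¬ N.Prime) :
    ∃ a b : ℕ, 0 < b ∧ N = (6 * a + 5) * (6 * b + 1) := by
  obtain ⟨p, hp, hd, hp5⟩ := exists_prime_factor_five_mod_six N h5
  obtain ⟨e, hNe⟩ := hd
  have he1 : e ≠ 1 := by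
    intro h1
    rw [h1, mul_one] at hNe
    exact hnp (hNe ▸ hp)
  have he0 : e ≠ 0 := by
    intro h0; rw [h0, mul_zero] at hNe; omega
  have hemod : e % 6 = 1 := by
    have hmm : (p % 6) * (e % 6) % 6 = 5 := by
      rw [← Nat.mul_mod, ← hNe]; exact h5
    rw [hp5] at hmm
    omega
  refine ⟨(p - 5) / 6, (e - 1) / 6, by omega, ?_⟩
  have hpe : 6 * ((p - 5) / 6) + 5 = p := by omega
  have hee : 6 * ((e - 1) / 6) + 1 = e := by omega
  rw [hpe, hee]; exact hNe

theorem Nat.not_prime_mul' {a b n : ℕ} (h : a * b = n) (h₁ : a ≠ 1) (h₂ : b ≠ 1) :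
    ¬Nat.Prime n := by
  rw [← h]; exact Nat.not_prime_mul h₁ h₂

/-- For every positive integer `x`, both `6x+5` and `6x+11` are prime iff `x` is not
expressible in any of the four forms `(6m−1)n + m − 1`, `(6m−1)n + m − 2`,
`(6m+1)n − m − 1`, `(6m+1)n − m − 2` with `m, n` positive integers. -/
theorem sexy_prime_five_iff_not_general_solution (x : ℕ) (hx : 0 < x) :
    (Nat.Prime (6 * x + 5) ∧ Nat.Prime (6 * x + 11)) ↔
      ¬ ∃ m n : ℕ, 0 < m ∧ 0 < n ∧
        (x = (6 * m - 1) * n + m - 1 ∨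
         x = (6 * m - 1) * n + m - 2 ∨
         x = (6 * m + 1) * n - m - 1 ∨
         x = (6 * m + 1) * n - m - 2) := by
  constructor
  · rintro ⟨hP, hQ⟩ ⟨m, n, hm, hn, hforms⟩
    obtain ⟨a, rfl⟩ : ∃ a, m = a + 1 := ⟨m - 1, by omega⟩
    obtain ⟨b, rfl⟩ : ∃ b, n = b + 1 := ⟨n - 1, by omega⟩
    have e1 : 6 * (a + 1) - 1 = 6 * a + 5 := by omega
    have e2 : 6 * (a + 1) + 1 = 6 * a + 7 := by omega
    rw [e1, e2] at hforms
    have hexp1 : (6 * a + 5) * (b + 1) = (6 * a + 5) * b + (6 * a + 5) := by ring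
    have hexp2 : (6 * a + 7) * (b + 1) = (6 * a + 7) * b + (6 * a + 7) := by ring
    rcases hforms with h | h | h | h
    · rw [hexp1] at h
      have hk : x = (6 * a + 5) * b + (7 * a + 5) := by
        generalize (6 * a + 5) * b = k at h ⊢; omega
      exact Nat.not_prime_mul' (a := 6 * a + 5) (b := 6 * b + 7)
        (by rw [hk]; ring) (by omega) (by omega) hP
    · rw [hexp1] at h
      have hk : x = (6 * a + 5) * b + (7 * a + 4) := by
        generalize (6 * a + 5) * b = k at h ⊢; omega
      exact Nat.not_prime_mul' (a := 6 * a + 5) (b := 6 * b + 7)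
        (by rw [hk]; ring) (by omega) (by omega) hQ
    · rw [hexp2] at h
      have hk : x = (6 * a + 7) * b + (5 * a + 5) := by
        generalize (6 * a + 7) * b = k at h ⊢; omega
      exact Nat.not_prime_mul' (a := 6 * b + 5) (b := 6 * a + 7)
        (by rw [hk]; ring) (by omega) (by omega) hP
    · rw [hexp2] at h
      have hk : x = (6 * a + 7) * b + (5 * a + 4) := by
        generalize (6 * a + 7) * b = k at h ⊢; omega
      exact Nat.not_prime_mul' (a := 6 * b + 5) (b := 6 * a + 7)
        (by rw [hk]; ring) (by omega) (by omega) hQ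
  · intro hno
    by_contra hc
    rw [Decidable.not_and_iff_or_not] at hc
    apply hno
    rcases hc with hc | hc
    · obtain ⟨a, b, hb, hfac⟩ :=
        comp_five_mod_six_factors (6 * x + 5) (by omega) hc
      refine ⟨a + 1, b, by omega, hb, Or.inl ?_⟩
      have e1 : 6 * (a + 1) - 1 = 6 * a + 5 := by omega
      rw [e1]
      have hx6 : 6 * x + 5 = 6 * ((6 * a + 5) * b + a) + 5 := by rw [hfac]; ring
      generalize (6 * a + 5) * b = k at hx6 ⊢
      omega
    · obtain ⟨a, b, hb, hfac⟩ :=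
        comp_five_mod_six_factors (6 * x + 11) (by omega) hc
      refine ⟨a + 1, b, by omega, hb, Or.inr (Or.inl ?_)⟩
      have e1 : 6 * (a + 1) - 1 = 6 * a + 5 := by omega
      rw [e1]
      have hx6 : 6 * x + 11 = 6 * ((6 * a + 5) * b + a) + 5 := by rw [hfac]; ring
      have hge : 5 ≤ (6 * a + 5) * b := by nlinarith
      generalize (6 * a + 5) * b = k at hx6 hge ⊢
      omega
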